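/- arXiv:1601.06453 — 3 statements merged into one kernel-verified Lean document; each statement's English description precedes it below -/
import Mathlib

section
/- For all α ∈ [0,1] and γ ∈ [0,1], h(α*γ) ≥ h(γ) + (1-h(γ))·4α(1-α) = 1 - (1-2α)²·(1-h(γ)), where a*b := a(1-b)+b(1-a). -/
open Real Filter MeasureTheory

/-- Binary entropy function (base-2 logarithm), with `binEnt 0 = binEnt 1 = 0`. -/
noncomputable def binEnt (p : ℝ) : ℝ :=
  -p * Real.logb 2 p - (1 - p) * Real.logb 2 (1 - p)

/-- Inverse of the binary entropy function, mapping `[0,1]` onto `[0,1/2]`. -/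
noncomputable def binEntInv (y : ℝ) : ℝ :=
  sInf {p : ℝ | p ∈ Set.Icc (0:ℝ) (1/2) ∧ y ≤ binEnt p}

/-- Binary convolution `a*b := a(1-b) + b(1-a)`. -/
def bConv (a b : ℝ) : ℝ := a * (1 - b) + b * (1 - a)

/-- Shannon entropy (in bits) of a distribution on a finite type. -/
noncomputable def entropyDist {β : Type*} [Fintype β] (p : β → ℝ) : ℝ :=
  ∑ b, -(p b * Real.logb 2 (p b))

/-- Probability of the path `x` under the stationary symmetric binary Markov process with
transition probability `q`: the first coordinate is uniform (`Bernoulli(1/2)`) and each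
subsequent coordinate flips the previous one with probability `q`. -/
noncomputable def symPathProb (q : ℝ) (n : ℕ) (x : Fin n → Bool) : ℝ :=
  ∏ i : Fin n,
    if (i : ℕ) = 0 then (1/2 : ℝ)
    else if x ⟨(i : ℕ) - 1, Nat.lt_of_le_of_lt (Nat.sub_le _ _) i.isLt⟩ = x i then 1 - q else q

/-- Output distribution of a memoryless binary symmetric channel with crossover probability `a`
applied to an input with distribution `p` (each coordinate flipped independently w.p. `a`). -/
noncomputable def bscOutput {n : ℕ} (a : ℝ) (p : (Fin n → Bool) → ℝ) : (Fin n → Bool) → ℝ :=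
  fun y => ∑ x : Fin n → Bool, p x * ∏ i, (if y i = x i then 1 - a else a)

/-- Distribution of the projection onto the coordinates in `s` of a vector with distribution `p`. -/
noncomputable def projDist {n : ℕ} (p : (Fin n → Bool) → ℝ) (s : Finset (Fin n)) :
    ({ i // i ∈ s } → Bool) → ℝ :=
  fun y => ∑ x : Fin n → Bool, if (∀ i : { i // i ∈ s }, x i.val = y i) then p x else 0

/-- `H(X_S | S) = ∑_{s ⊆ [n]} P(S = s) H(X_s)`, where the random subset `S` contains each
element of `[n]` independently with probability `lam`. -/
noncomputable def condEntProj {n : ℕ} (lam : ℝ) (p : (Fin n → Bool) → ℝ) : ℝ :=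
  ∑ s : Finset (Fin n), lam ^ s.card * (1 - lam) ^ (n - s.card) * entropyDist (projDist p s)

/-- Transition kernel of a binary Markov chain: `P(b | a)` with off-diagonal entries
`q01 = P(1|0)` and `q10 = P(0|1)`. -/
def markovTrans (q01 q10 : ℝ) (a b : Bool) : ℝ :=
  if a then (if b then 1 - q10 else q10) else (if b then q01 else 1 - q01)

/-- Probability of the path `x` under the binary Markov chain with initial distribution
`(p0, p1)` and transition probabilities `q01, q10`. -/
noncomputable def markovPathProb (p0 p1 q01 q10 : ℝ) (n : ℕ) (x : Fin n → Bool) : ℝ :=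
  ∏ i : Fin n,
    if (i : ℕ) = 0 then (if x i then p1 else p0)
    else markovTrans q01 q10 (x ⟨(i : ℕ) - 1, Nat.lt_of_le_of_lt (Nat.sub_le _ _) i.isLt⟩) (x i)

open Set

noncomputable def mgF (x : ℝ) : ℝ := ((1+x) * Real.log (1+x) + (1-x) * Real.log (1-x))/2
noncomputable def mgA (x : ℝ) : ℝ := (Real.log (1+x) - Real.log (1-x))/2

lemma mgF_zero : mgF 0 = 0 := by simp [mgF]
lemma mgA_zero : mgA 0 = 0 := by simp [mgA]

lemma hasDerivAt_log_one_add {x : ℝ} (h1 : (1:ℝ)+x ≠ 0) :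
    HasDerivAt (fun y : ℝ => Real.log (1+y)) (1/(1+x)) x := by
  have h := (Real.hasDerivAt_log h1).comp x ((hasDerivAt_id x).const_add 1)
  simpa [one_div, Function.comp_def] using h

lemma hasDerivAt_log_one_sub {x : ℝ} (h2 : (1:ℝ)-x ≠ 0) :
    HasDerivAt (fun y : ℝ => Real.log (1-y)) (-(1/(1-x))) x := by
  have h := (Real.hasDerivAt_log h2).comp x ((hasDerivAt_id x).const_sub 1)
  simpa [one_div, Function.comp_def] using h

lemma hasDerivAt_mgF {x : ℝ} (h1 : -1 < x) (h2 : x < 1) : HasDerivAt mgF (mgA x) x := by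
  have e1 : (1:ℝ)+x ≠ 0 := by linarith
  have e2 : (1:ℝ)-x ≠ 0 := by linarith
  have p1 : HasDerivAt (fun y : ℝ => (1+y) * Real.log (1+y))
      (1 * Real.log (1+x) + (1+x) * (1/(1+x))) x :=
    ((hasDerivAt_id x).const_add 1).mul (hasDerivAt_log_one_add e1)
  have p2 : HasDerivAt (fun y : ℝ => (1-y) * Real.log (1-y))
      ((-1) * Real.log (1-x) + (1-x) * (-(1/(1-x)))) x :=
    ((hasDerivAt_id x).const_sub 1).mul (hasDerivAt_log_one_sub e2)
  have := (p1.add p2).div_const 2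
  refine this.congr_deriv ?_
  unfold mgA
  field_simp
  ring

lemma hasDerivAt_mgA {x : ℝ} (h1 : -1 < x) (h2 : x < 1) :
    HasDerivAt mgA (1/(1-x^2)) x := by
  have e1 : (1:ℝ)+x ≠ 0 := by linarith
  have e2 : (1:ℝ)-x ≠ 0 := by linarith
  have := ((hasDerivAt_log_one_add e1).sub (hasDerivAt_log_one_sub e2)).div_const 2
  refine this.congr_deriv ?_
  have e3 : (1:ℝ) - x^2 ≠ 0 := by nlinarith
  field_simp
  ring

/-- derivative of x/(1-x²) -/
lemma hasDerivAt_ratio {x : ℝ} (h1 : -1 < x) (h2 : x < 1) :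
    HasDerivAt (fun y : ℝ => y/(1-y^2)) ((1+x^2)/(1-x^2)^2) x := by
  have e3 : (1:ℝ) - x^2 ≠ 0 := by nlinarith
  have hd : HasDerivAt (fun y : ℝ => 1 - y^2) (-(2*x^(2-1))) x :=
    (hasDerivAt_pow 2 x).const_sub 1
  have := (hasDerivAt_id x).div hd e3
  refine this.congr_deriv ?_
  simp only [id_eq]
  field_simp
  ring

lemma mgA_le_ratio {x : ℝ} (hx : x ∈ Ico (0:ℝ) 1) : mgA x ≤ x/(1-x^2) := by
  set D : ℝ → ℝ := fun y => y/(1-y^2) - mgA y with hD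
  have mono : MonotoneOn D (Ico (0:ℝ) 1) := by
    have deriv : ∀ y ∈ Ico (0:ℝ) 1, HasDerivAt D ((1+y^2)/(1-y^2)^2 - 1/(1-y^2)) y := by
      intro y hy
      exact (hasDerivAt_ratio (by linarith [hy.1]) hy.2).sub
        (hasDerivAt_mgA (by linarith [hy.1]) hy.2)
    apply monotoneOn_of_hasDerivWithinAt_nonneg (convex_Ico 0 1)
      (f' := fun y => (1+y^2)/(1-y^2)^2 - 1/(1-y^2))
    · intro y hy
      exact (deriv y hy).continuousAt.continuousWithinAt
    · rw [interior_Ico]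
      intro y hy
      exact (deriv y (Ioo_subset_Ico_self hy)).hasDerivWithinAt
    · rw [interior_Ico]
      intro y hy
      have e3 : (0:ℝ) < 1 - y^2 := by nlinarith [hy.1, hy.2]
      rw [div_sub_div _ _ (by positivity) (ne_of_gt e3)]
      apply div_nonneg _ (by positivity)
      nlinarith
  have h0 : D 0 = 0 := by simp [hD, mgA_zero]
  have := mono (by constructor <;> norm_num) hx hx.1
  rw [h0] at this
  simpa [hD] using this

/-- G(x) = x·artanh x − 2F(x) ≥ 0 on [0,1) -/
lemma mgG_nonneg {x : ℝ} (hx : x ∈ Ico (0:ℝ) 1) : 0 ≤ x * mgA x - 2 * mgF x := by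
  set G : ℝ → ℝ := fun y => y * mgA y - 2 * mgF y with hG
  have deriv : ∀ y ∈ Ico (0:ℝ) 1, HasDerivAt G (1 * mgA y + y * (1/(1-y^2)) - 2 * mgA y) y := by
    intro y hy
    exact ((hasDerivAt_id y).mul (hasDerivAt_mgA (by linarith [hy.1]) hy.2)).sub
      ((hasDerivAt_mgF (by linarith [hy.1]) hy.2).const_mul 2)
  have mono : MonotoneOn G (Ico (0:ℝ) 1) := by
    apply monotoneOn_of_hasDerivWithinAt_nonneg (convex_Ico 0 1)
      (f' := fun y => 1 * mgA y + y * (1/(1-y^2)) - 2 * mgA y)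
    · intro y hy
      exact (deriv y hy).continuousAt.continuousWithinAt
    · rw [interior_Ico]
      intro y hy
      exact (deriv y (Ioo_subset_Ico_self hy)).hasDerivWithinAt
    · rw [interior_Ico]
      intro y hy
      have := mgA_le_ratio (Ioo_subset_Ico_self hy)
      have hy1 : y * (1/(1-y^2)) = y/(1-y^2) := by ring
      linarith
  have h0 : G 0 = 0 := by simp [hG, mgA_zero, mgF_zero]
  have := mono (by constructor <;> norm_num) hx hx.1
  rw [h0] at this
  simpa [hG] using this

lemma continuous_mgF : Continuous mgF := by
  have h : Continuous fun t : ℝ => t * Real.log t := Real.continuous_mul_log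
  exact ((h.comp (continuous_const.add continuous_id)).add
    (h.comp (continuous_const.sub continuous_id))).div_const 2

/-- F(x)/x² is monotone on (0,1] -/
lemma mgF_ratio_mono : MonotoneOn (fun x => mgF x / x^2) (Ioc (0:ℝ) 1) := by
  apply monotoneOn_of_hasDerivWithinAt_nonneg (convex_Ioc 0 1)
    (f' := fun y => (mgA y * y^2 - mgF y * (2*y^(2-1))) / (y^2)^2)
  · exact (continuous_mgF.continuousOn).div (continuous_pow 2).continuousOn
      (fun y hy => by have h0 : (0:ℝ) < y := hy.1; positivity)
  · rw [interior_Ioc]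
    intro y hy
    exact ((hasDerivAt_mgF (by linarith [hy.1]) hy.2).div (hasDerivAt_pow 2 y)
      (by have h0 : (0:ℝ) < y := hy.1; positivity)).hasDerivWithinAt
  · rw [interior_Ioc]
    intro y hy
    have hG := mgG_nonneg (mem_Ico.2 ⟨le_of_lt hy.1, hy.2⟩)
    have hy0 : 0 < y := hy.1
    apply div_nonneg _ (by positivity)
    have hp : (2:ℕ) - 1 = 1 := rfl
    rw [hp, pow_one]
    nlinarith

lemma mgF_even (x : ℝ) : mgF (-x) = mgF x := by
  unfold mgF
  rw [show (1:ℝ) + -x = 1 - x by ring, show (1:ℝ) - -x = 1 + x by ring]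
  ring

lemma mgF_key {u v : ℝ} (hu : u ∈ Icc (0:ℝ) 1) (hv : v ∈ Icc (0:ℝ) 1) :
    mgF (u*v) ≤ u^2 * mgF v := by
  rcases eq_or_lt_of_le hu.1 with hu0 | hu0
  · simp [← hu0, mgF_zero]
  rcases eq_or_lt_of_le hv.1 with hv0 | hv0
  · simp [← hv0, mgF_zero]
  have huv : u*v ∈ Ioc (0:ℝ) 1 := ⟨by positivity, by nlinarith [hu.2, hv.2]⟩
  have hvI : v ∈ Ioc (0:ℝ) 1 := ⟨hv0, hv.2⟩
  have hle : u*v ≤ v := by nlinarith [hu.2]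
  have h := mgF_ratio_mono huv hvI hle
  rw [div_le_div_iff₀ (by positivity) (by positivity)] at h
  have hv2 : (0:ℝ) < v^2 := by positivity
  nlinarith

lemma mgF_abs (t : ℝ) : mgF t = mgF |t| := by
  rcases abs_cases t with ⟨h,_⟩ | ⟨h,_⟩
  · rw [h]
  · rw [h, mgF_even]

lemma binEnt_eq {p : ℝ} (hp : p ∈ Set.Icc (0:ℝ) 1) :
    binEnt p = 1 - mgF (1-2*p) / Real.log 2 := by
  have hL : (0:ℝ) < Real.log 2 := Real.log_pos (by norm_num)
  have h2 : Real.log 2 ≠ 0 := ne_of_gt hL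
  rcases eq_or_lt_of_le hp.1 with h0 | h0
  · rw [← h0]
    simp [binEnt, mgF]
    norm_num
  rcases eq_or_lt_of_le hp.2 with h1 | h1
  · rw [h1]
    simp [binEnt, mgF]
    norm_num
  · have e1 : (1:ℝ) + (1-2*p) = 2*(1-p) := by ring
    have e2 : (1:ℝ) - (1-2*p) = 2*p := by ring
    rw [binEnt, mgF, e1, e2, Real.log_mul two_ne_zero (by linarith : (1:ℝ)-p ≠ 0),
      Real.log_mul two_ne_zero (ne_of_gt h0), Real.logb, Real.logb]
    field_simp
    ring


/-- For all `α, γ ∈ [0,1]`: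
`h(α*γ) ≥ h(γ) + (1-h(γ))·4α(1-α) = 1 - (1-2α)²·(1-h(γ))`. -/
theorem binEnt_conv_lower_bound (a c : ℝ) (ha : a ∈ Set.Icc (0:ℝ) 1) (hc : c ∈ Set.Icc (0:ℝ) 1) :
    binEnt (bConv a c) ≥ binEnt c + (1 - binEnt c) * (4 * a * (1 - a))
    ∧ binEnt c + (1 - binEnt c) * (4 * a * (1 - a)) = 1 - (1 - 2*a)^2 * (1 - binEnt c) := by
  obtain ⟨ha0, ha1⟩ := ha
  obtain ⟨hc0, hc1⟩ := hc
  constructor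
  · have hL : (0:ℝ) < Real.log 2 := Real.log_pos (by norm_num)
    have hb : bConv a c ∈ Set.Icc (0:ℝ) 1 := by
      constructor
      · unfold bConv; nlinarith
      · unfold bConv; nlinarith
    have hu : |1-2*a| ∈ Set.Icc (0:ℝ) 1 :=
      ⟨abs_nonneg _, abs_le.2 ⟨by linarith, by linarith⟩⟩
    have hv : |1-2*c| ∈ Set.Icc (0:ℝ) 1 :=
      ⟨abs_nonneg _, abs_le.2 ⟨by linarith, by linarith⟩⟩
    have key : mgF (1-2*bConv a c) ≤ (1-2*a)^2 * mgF (1-2*c) := by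
      have e : 1-2*bConv a c = (1-2*a)*(1-2*c) := by unfold bConv; ring
      calc mgF (1-2*bConv a c) = mgF (|1-2*a| * |1-2*c|) := by
            rw [e, mgF_abs, abs_mul]
        _ ≤ |1-2*a|^2 * mgF |1-2*c| := mgF_key hu hv
        _ = (1-2*a)^2 * mgF (1-2*c) := by rw [sq_abs, ← mgF_abs]
    rw [ge_iff_le, binEnt_eq hb, binEnt_eq ⟨hc0, hc1⟩]
    have h2 := (div_le_div_iff_of_pos_right hL).2 key
    rw [mul_div_assoc] at h2
    nlinarith [h2]
  · ring
end

section
/- Fix q ∈ (0,1/2). For ε ∈ (0,1/2) set λ = 4ε² (equivalently λ = (1-2α)² with α = 1/2 - ε), let G_ε be a geometric random variable with parameter λ, and let β(ε) := E[h((1-(1-2q)^{G_ε})/2)]. Then β(ε) = 1 - 4ε²·Σ_{k=1}^∞ (log₂e)/(2k(2k-1)) · (1-2q)^{2k}/(1-(1-2q)^{2k}) + O(ε⁴) as ε → 0; that is, there exist C > 0 and ε₀ > 0 such that for all 0 < ε < ε₀, |β(ε) - 1 + 4ε²·Σ_{k=1}^∞ (log₂e)/(2k(2k-1))·(1-2q)^{2k}/(1-(1-2q)^{2k})|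 ≤ C·ε⁴. -/
open Real Filter MeasureTheory

set_option maxHeartbeats 1000000 in
lemma binEnt_nonneg {p : ℝ} (h0 : 0 ≤ p) (h1 : p ≤ 1) : 0 ≤ binEnt p := by
  unfold binEnt
  have hb : (1:ℝ) < 2 := one_lt_two
  have h1' : Real.logb 2 p ≤ 0 := Real.logb_nonpos hb h0 h1
  have h2' : Real.logb 2 (1-p) ≤ 0 := Real.logb_nonpos hb (by linarith) (by linarith)
  nlinarith

set_option maxHeartbeats 1000000 in
lemma aux_entropy_series (x : ℝ) (hx0 : 0 ≤ x) (hx1 : x < 1) :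
    HasSum (fun k : ℕ => Real.logb 2 (Real.exp 1) / (2*((k:ℝ)+1) * (2*((k:ℝ)+1) - 1))
      * x^(2*(k+1))) (1 - binEnt ((1-x)/2)) := by
  have habs : |x| < 1 := by rw [abs_of_nonneg hx0]; exact hx1
  have h1 := Real.hasSum_pow_div_log_of_abs_lt_one habs
  have h2 := Real.hasSum_pow_div_log_of_abs_lt_one (x := -x) (by rwa [abs_neg])
  set f : ℕ → ℝ := fun n => (1-x)/2 * (x^(n+1)/(n+1)) + (1+x)/2 * ((-x)^(n+1)/(n+1)) with hfdef
  set T : ℝ := (1-x)/2 * (-Real.log (1-x)) + (1+x)/2 * (-Real.log (1+x)) with hTdef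
  have hf : HasSum f T := by
    have h := (h1.mul_left ((1-x)/2)).add (h2.mul_left ((1+x)/2))
    rw [sub_neg_eq_add] at h
    have hT2 : T = (1-x)/2 * -Real.log (1-x) + (1+x)/2 * -Real.log (1+x) := by
      rw [hTdef]
    rw [hT2]
    exact h
  have hfe : ∀ k : ℕ, f (2*k) = -(x^(2*k+2)) / (2*(k:ℝ)+1) := by
    intro k
    have hodd : (-x)^(2*k+1) = -(x^(2*k+1)) := Odd.neg_pow ⟨k, by ring⟩ x
    simp only [hfdef, hodd]
    push_cast
    ring
  have hfo : ∀ k : ℕ, f (2*k+1) = x^(2*k+2) / (2*(k:ℝ)+2) := by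
    intro k
    have heven : (-x)^(2*k+2) = x^(2*k+2) := Even.neg_pow ⟨k+1, by ring⟩ x
    simp only [hfdef, heven]
    push_cast
    ring
  have hx2 : x^2 < 1 := by nlinarith
  have hgeo : Summable (fun k : ℕ => (x^2)^k) :=
    summable_geometric_of_lt_one (by positivity) hx2
  have hbound : ∀ k : ℕ, x^(2*k+2) ≤ (x^2)^k := by
    intro k
    have h1 : x^(2*k+2) = (x^2)^k * x^2 := by ring
    nlinarith [pow_nonneg (sq_nonneg x) k, sq_nonneg x, pow_nonneg hx0 (2*k+2)]
  have habs_bound : ∀ (c : ℝ) (k : ℕ), 1 ≤ c → |x^(2*k+2) / c| ≤ (x^2)^k := by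
    intro c k hc
    rw [abs_div, abs_of_nonneg (pow_nonneg hx0 _), abs_of_nonneg (by linarith)]
    calc x^(2*k+2) / c ≤ x^(2*k+2) := div_le_self (pow_nonneg hx0 _) hc
      _ ≤ (x^2)^k := hbound k
  have hse : Summable (fun k : ℕ => f (2*k)) := by
    apply Summable.of_abs
    apply Summable.of_nonneg_of_le (fun k => abs_nonneg _) _ hgeo
    intro k
    rw [hfe k, neg_div, abs_neg]
    exact habs_bound _ k (by linarith [Nat.cast_nonneg (α := ℝ) k])
  have hso : Summable (fun k : ℕ => f (2*k+1)) := by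
    apply Summable.of_abs
    apply Summable.of_nonneg_of_le (fun k => abs_nonneg _) _ hgeo
    intro k
    rw [hfo k]
    exact habs_bound _ k (by linarith [Nat.cast_nonneg (α := ℝ) k])
  have hAB : HasSum f ((∑' k, f (2*k)) + ∑' k, f (2*k+1)) :=
    HasSum.even_add_odd hse.hasSum hso.hasSum
  have hpair : HasSum (fun k : ℕ => f (2*k) + f (2*k+1)) T := by
    rw [← hAB.unique hf]
    exact hse.hasSum.add hso.hasSum
  have hkey : HasSum (fun k : ℕ => -(x^(2*k+2) / ((2*(k:ℝ)+2) * (2*(k:ℝ)+1)))) T := by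
    have heq : ∀ k : ℕ, f (2*k) + f (2*k+1) = -(x^(2*k+2) / ((2*(k:ℝ)+2) * (2*(k:ℝ)+1))) := by
      intro k
      rw [hfe k, hfo k]
      have d1 : (2*(k:ℝ)+1) ≠ 0 := by positivity
      have d2 : (2*(k:ℝ)+2) ≠ 0 := by positivity
      field_simp
      ring
    exact funext heq ▸ hpair
  have hlog2 : (0:ℝ) < Real.log 2 := Real.log_pos one_lt_two
  have hkey2 : HasSum (fun k : ℕ => x^(2*k+2) / ((2*(k:ℝ)+2) * (2*(k:ℝ)+1)) / Real.log 2)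
      (-T / Real.log 2) := by
    have h := (hkey.neg).div_const (Real.log 2)
    simpa only [neg_neg] using h
  have hbe : 1 - binEnt ((1-x)/2) = -T / Real.log 2 := by
    have hx1' : (0:ℝ) < 1 - x := by linarith
    have hx2' : (0:ℝ) < 1 + x := by linarith
    have l1 : Real.log ((1-x)/2) = Real.log (1-x) - Real.log 2 :=
      Real.log_div (ne_of_gt hx1') two_ne_zero
    have l2 : Real.log ((1+x)/2) = Real.log (1+x) - Real.log 2 := by
      have h12 : 1 - (1-x)/2 = (1+x)/2 := by ring
      exact Real.log_div (ne_of_gt hx2') two_ne_zero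
    have h12 : 1 - (1-x)/2 = (1+x)/2 := by ring
    rw [binEnt, h12, Real.logb, Real.logb, l1, l2, hTdef]
    field_simp
    ring
  rw [hbe]
  have hlogbe : Real.logb 2 (Real.exp 1) = 1 / Real.log 2 := by
    rw [Real.logb, Real.log_exp]
  have heq2 : ∀ k : ℕ, Real.logb 2 (Real.exp 1) / (2*((k:ℝ)+1) * (2*((k:ℝ)+1) - 1)) * x^(2*(k+1))
      = x^(2*k+2) / ((2*(k:ℝ)+2) * (2*(k:ℝ)+1)) / Real.log 2 := by
    intro k
    have hco : (2*((k:ℝ)+1) * (2*((k:ℝ)+1) - 1)) = (2*(k:ℝ)+2) * (2*(k:ℝ)+1) := by ring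
    have hexp : 2*(k+1) = 2*k+2 := by ring
    have d1 : (2*(k:ℝ)+1) ≠ 0 := by positivity
    have d2 : (2*(k:ℝ)+2) ≠ 0 := by positivity
    rw [hlogbe, hco, hexp]
    ring
  simp only [heq2]
  exact hkey2

lemma aux_diff_eq (c u L : ℝ) (h1 : (1:ℝ) - u ≠ 0) (h2 : (1:ℝ) - (1-L)*u ≠ 0) :
    L * (c * (u/(1-u))) - c * (L*u/(1-(1-L)*u))
      = L^2 * c * u^2 / ((1-u)*(1-(1-L)*u)) := by
  rw [eq_div_iff (mul_ne_zero h1 h2)]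
  have a : u/(1-u)*(1-u) = u := div_mul_cancel₀ u h1
  have b : L*u/(1-(1-L)*u)*(1-(1-L)*u) = L*u := div_mul_cancel₀ _ h2
  linear_combination (L*c*(1-(1-L)*u)) * a - (c*(1-u)) * b

set_option maxHeartbeats 1000000 in
/-- For fixed `q ∈ (0,1/2)`, `λ = 4ε²` and `G_ε` geometric with parameter `λ`,
`β(ε) = E[h((1-(1-2q)^{G_ε})/2)]` satisfies
`β(ε) = 1 - 4ε²·Σ_{k≥1} (log₂e)/(2k(2k-1))·(1-2q)^{2k}/(1-(1-2q)^{2k}) + O(ε⁴)`. -/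
theorem beta_very_noisy_asymptotics (q : ℝ) (hq : q ∈ Set.Ioo (0:ℝ) (1/2)) :
    ∃ C > (0:ℝ), ∃ e₀ > (0:ℝ), ∀ e : ℝ, 0 < e → e < e₀ → e < 1/2 →
      |(∑' g : ℕ, (1 - 4*e^2)^g * (4*e^2) * binEnt ((1 - (1 - 2*q)^(g+1))/2))
        - 1 + 4*e^2 *
          ∑' k : ℕ, Real.logb 2 (Real.exp 1) / (2*((k:ℝ)+1) * (2*((k:ℝ)+1) - 1)) *
            ((1 - 2*q)^(2*(k+1)) / (1 - (1 - 2*q)^(2*(k+1))))| ≤ C * e^4 := by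
  obtain ⟨hq0, hq2⟩ := hq
  set t : ℝ := 1 - 2*q with ht
  have ht0 : 0 < t := by rw [ht]; linarith
  have ht1 : t < 1 := by rw [ht]; linarith
  have ht2 : t^2 < 1 := by nlinarith
  have ht2' : 0 < 1 - t^2 := by linarith
  have hlogbe : Real.logb 2 (Real.exp 1) = 1 / Real.log 2 := by
    rw [Real.logb, Real.log_exp]
  have hlog2 : (0:ℝ) < Real.log 2 := Real.log_pos one_lt_two
  have hco : ∀ k : ℕ, (2*((k:ℝ)+1) * (2*((k:ℝ)+1) - 1)) = (2*(k:ℝ)+2) * (2*(k:ℝ)+1) :=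
    fun k => by ring
  have ha_pos : ∀ k : ℕ,
      0 < Real.logb 2 (Real.exp 1) / (2*((k:ℝ)+1) * (2*((k:ℝ)+1) - 1)) := by
    intro k; rw [hlogbe, hco k]; positivity
  have ha_le : ∀ k : ℕ,
      Real.logb 2 (Real.exp 1) / (2*((k:ℝ)+1) * (2*((k:ℝ)+1) - 1)) ≤ 1/Real.log 2 := by
    intro k; rw [hlogbe, hco k]
    have h1 : (1:ℝ) ≤ (2*(k:ℝ)+2)*(2*(k:ℝ)+1) := by nlinarith [Nat.cast_nonneg (α := ℝ) k]
    exact div_le_self (by positivity) h1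
  have hu_pos : ∀ k : ℕ, 0 < t^(2*(k+1)) := fun k => pow_pos ht0 _
  have hu_le : ∀ k : ℕ, t^(2*(k+1)) ≤ t^2 := by
    intro k
    apply pow_le_pow_of_le_one ht0.le ht1.le
    omega
  have hu_lt1 : ∀ k : ℕ, t^(2*(k+1)) < 1 := fun k => lt_of_le_of_lt (hu_le k) ht2
  have hu_eq : ∀ k : ℕ, t^(2*(k+1)) = (t^2)^k * t^2 := by
    intro k; rw [pow_mul, pow_succ]
  have hgeo2 : Summable (fun k : ℕ => (t^2)^k) :=
    summable_geometric_of_lt_one (sq_nonneg t) ht2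
  -- summability of a k * (u k)^2
  have hMs : Summable (fun k : ℕ =>
      Real.logb 2 (Real.exp 1) / (2*((k:ℝ)+1) * (2*((k:ℝ)+1) - 1)) * (t^(2*(k+1)))^2) := by
    apply Summable.of_nonneg_of_le
      (fun k => le_of_lt (mul_pos (ha_pos k) (pow_pos (hu_pos k) 2)))
      _ (hgeo2.mul_left (1/Real.log 2))
    intro k
    have h1 : (t^(2*(k+1)))^2 ≤ (t^2)^k := by
      have h2 : t^(2*(k+1)) ≤ (t^2)^k := by
        rw [hu_eq k]
        nlinarith [pow_nonneg (sq_nonneg t) k, sq_nonneg t]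
      nlinarith [hu_pos k, hu_lt1 k]
    exact mul_le_mul (ha_le k) h1 (pow_nonneg (hu_pos k).le 2) (by positivity)
  set M : ℝ := ∑' k : ℕ,
    Real.logb 2 (Real.exp 1) / (2*((k:ℝ)+1) * (2*((k:ℝ)+1) - 1)) * (t^(2*(k+1)))^2 with hMdef
  have hM0 : 0 ≤ M :=
    tsum_nonneg fun k => le_of_lt (mul_pos (ha_pos k) (pow_pos (hu_pos k) 2))
  have hCpos : 0 < 16*M/(1-t^2)^2 + 1 := by
    have : 0 ≤ 16*M/(1-t^2)^2 := div_nonneg (by linarith) (by positivity)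
    linarith
  refine ⟨16*M/(1-t^2)^2 + 1, hCpos, 1/2, by norm_num, ?_⟩
  intro e he0 he1 _
  set l : ℝ := 4*e^2 with hl
  have hl0 : 0 < l := by rw [hl]; positivity
  have hl1 : l < 1 := by rw [hl]; nlinarith
  have hl1' : 0 < 1 - l := by linarith
  -- entropy expansion per g
  have hxg0 : ∀ g : ℕ, 0 ≤ t^(g+1) := fun g => (pow_pos ht0 _).le
  have hxg1 : ∀ g : ℕ, t^(g+1) < 1 := fun g => pow_lt_one₀ ht0.le ht1 (Nat.succ_ne_zero g)
  have hent : ∀ g : ℕ, HasSum (fun k : ℕ =>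
      Real.logb 2 (Real.exp 1) / (2*((k:ℝ)+1) * (2*((k:ℝ)+1) - 1)) * (t^(g+1))^(2*(k+1)))
      (1 - binEnt ((1 - t^(g+1))/2)) := fun g => aux_entropy_series _ (hxg0 g) (hxg1 g)
  have hb0 : ∀ g : ℕ, 0 ≤ binEnt ((1 - t^(g+1))/2) := by
    intro g
    exact binEnt_nonneg (by linarith [hxg1 g]) (by linarith [hxg0 g])
  have hb1 : ∀ g : ℕ, binEnt ((1 - t^(g+1))/2) ≤ 1 := by
    intro g
    have h := (hent g).nonneg
      (fun k => le_of_lt (mul_pos (ha_pos k) (pow_pos (pow_pos ht0 _) _)))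
    linarith
  -- beta summability
  have hβs : Summable (fun g : ℕ => (1-l)^g * l * binEnt ((1 - t^(g+1))/2)) := by
    apply Summable.of_nonneg_of_le
      (fun g => mul_nonneg (mul_nonneg (pow_nonneg hl1'.le g) hl0.le) (hb0 g))
      _ ((summable_geometric_of_lt_one hl1'.le (by linarith)).mul_right l)
    intro g
    have h := mul_le_mul_of_nonneg_left (hb1 g)
      (mul_nonneg (pow_nonneg hl1'.le g) hl0.le)
    simpa using h
  have hβ := hβs.hasSum
  have hg1 : HasSum (fun g : ℕ => (1-l)^g * l) 1 := by
    have h := (hasSum_geometric_of_lt_one hl1'.le (by linarith)).mul_right l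
    have h2 : (1 - (1-l))⁻¹ * l = 1 := by rw [sub_sub_cancel, inv_mul_cancel₀ hl0.ne']
    rwa [h2] at h
  have hrow : ∀ g : ℕ, HasSum (fun k : ℕ =>
      (1-l)^g * l * (Real.logb 2 (Real.exp 1) / (2*((k:ℝ)+1) * (2*((k:ℝ)+1) - 1))
        * (t^(g+1))^(2*(k+1))))
      ((1-l)^g * l * (1 - binEnt ((1 - t^(g+1))/2))) := fun g => (hent g).mul_left _
  set F : ℕ × ℕ → ℝ := fun p =>
    (1-l)^p.1 * l * (Real.logb 2 (Real.exp 1) / (2*((p.2:ℝ)+1) * (2*((p.2:ℝ)+1) - 1))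
      * (t^(p.1+1))^(2*(p.2+1))) with hFdef
  have hF0 : ∀ p : ℕ × ℕ, 0 ≤ F p := fun p =>
    mul_nonneg (mul_nonneg (pow_nonneg hl1'.le _) hl0.le)
      (le_of_lt (mul_pos (ha_pos _) (pow_pos (pow_pos ht0 _) _)))
  have hrowsum : Summable (fun g : ℕ => (1-l)^g * l * (1 - binEnt ((1 - t^(g+1))/2))) := by
    have h := hg1.summable.sub hβs
    apply h.congr
    intro g; ring
  have hFsum : Summable F := by
    rw [summable_prod_of_nonneg hF0]
    refine ⟨fun g => (hrow g).summable, ?_⟩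
    apply hrowsum.congr
    intro g
    exact ((hrow g).tsum_eq).symm
  have hFS := hFsum.hasSum
  have hfib1 : HasSum (fun g : ℕ => (1-l)^g * l * (1 - binEnt ((1 - t^(g+1))/2)))
      (∑' p : ℕ × ℕ, F p) := hFS.prod_fiberwise hrow
  have hfib1' : HasSum (fun g : ℕ => (1-l)^g * l * (1 - binEnt ((1 - t^(g+1))/2)))
      (1 - ∑' g : ℕ, (1-l)^g * l * binEnt ((1 - t^(g+1))/2)) := by
    have h := hg1.sub hβ
    have he : (fun g : ℕ => (1-l)^g * l - (1-l)^g * l * binEnt ((1 - t^(g+1))/2))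
        = (fun g : ℕ => (1-l)^g * l * (1 - binEnt ((1 - t^(g+1))/2))) := by
      funext g; ring
    rwa [he] at h
  have hSval : (∑' p : ℕ × ℕ, F p)
      = 1 - ∑' g : ℕ, (1-l)^g * l * binEnt ((1 - t^(g+1))/2) := hfib1.unique hfib1'
  -- columns
  have hcol : ∀ k : ℕ, HasSum (fun g : ℕ => F (g, k))
      (Real.logb 2 (Real.exp 1) / (2*((k:ℝ)+1) * (2*((k:ℝ)+1) - 1))
        * (l * t^(2*(k+1)) / (1 - (1-l) * t^(2*(k+1))))) := by
    intro k
    have hr0 : 0 ≤ (1-l) * t^(2*(k+1)) := mul_nonneg hl1'.le (hu_pos k).le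
    have hr1 : (1-l) * t^(2*(k+1)) < 1 := by
      have h1 : (1-l) * t^(2*(k+1)) ≤ 1 * t^(2*(k+1)) :=
        mul_le_mul_of_nonneg_right (by linarith) (hu_pos k).le
      calc (1-l) * t^(2*(k+1)) ≤ 1 * t^(2*(k+1)) := h1
        _ = t^(2*(k+1)) := one_mul _
        _ < 1 := hu_lt1 k
    have h := (hasSum_geometric_of_lt_one hr0 hr1).mul_right
      (l * t^(2*(k+1)) * (Real.logb 2 (Real.exp 1) / (2*((k:ℝ)+1) * (2*((k:ℝ)+1) - 1))))
    have hfun : (fun g : ℕ => ((1-l) * t^(2*(k+1)))^g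
          * (l * t^(2*(k+1)) * (Real.logb 2 (Real.exp 1) / (2*((k:ℝ)+1) * (2*((k:ℝ)+1) - 1)))))
        = (fun g : ℕ => F (g, k)) := by
      funext g
      show _ = (1-l)^g * l * (Real.logb 2 (Real.exp 1) / (2*((k:ℝ)+1) * (2*((k:ℝ)+1) - 1))
        * (t^(g+1))^(2*(k+1)))
      have hp : (t^(g+1))^(2*(k+1)) = (t^(2*(k+1)))^g * t^(2*(k+1)) := by
        rw [← pow_mul, ← pow_mul, ← pow_add]
        congr 1
        ring
      rw [hp, mul_pow]
      ring
    have hval : (1 - (1-l) * t^(2*(k+1)))⁻¹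
          * (l * t^(2*(k+1)) * (Real.logb 2 (Real.exp 1) / (2*((k:ℝ)+1) * (2*((k:ℝ)+1) - 1))))
        = Real.logb 2 (Real.exp 1) / (2*((k:ℝ)+1) * (2*((k:ℝ)+1) - 1))
          * (l * t^(2*(k+1)) / (1 - (1-l) * t^(2*(k+1)))) := by
      rw [div_eq_mul_inv (l * t^(2*(k+1)))]
      ring
    rw [hfun, hval] at h
    exact h
  have hswap : HasSum (fun p : ℕ × ℕ => F (p.2, p.1)) (∑' p : ℕ × ℕ, F p) :=
    (Equiv.prodComm ℕ ℕ).hasSum_iff.mpr hFS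
  have hfib2 : HasSum (fun k : ℕ =>
      Real.logb 2 (Real.exp 1) / (2*((k:ℝ)+1) * (2*((k:ℝ)+1) - 1))
        * (l * t^(2*(k+1)) / (1 - (1-l) * t^(2*(k+1)))))
      (1 - ∑' g : ℕ, (1-l)^g * l * binEnt ((1 - t^(g+1))/2)) := by
    have h := hswap.prod_fiberwise hcol
    rwa [hSval] at h
  -- T summability
  have hTs : Summable (fun k : ℕ =>
      Real.logb 2 (Real.exp 1) / (2*((k:ℝ)+1) * (2*((k:ℝ)+1) - 1))
        * (t^(2*(k+1)) / (1 - t^(2*(k+1))))) := by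
    apply Summable.of_nonneg_of_le
      (fun k => mul_nonneg (ha_pos k).le
        (div_nonneg (hu_pos k).le (by linarith [hu_lt1 k])))
      _ (hgeo2.mul_left (1/Real.log 2 * (t^2/(1-t^2))))
    intro k
    have hden : 0 < 1 - t^(2*(k+1)) := by linarith [hu_lt1 k]
    have h1 : t^(2*(k+1)) / (1 - t^(2*(k+1))) ≤ ((t^2)^k * t^2) / (1-t^2) := by
      apply div_le_div₀ (by positivity) (le_of_eq (hu_eq k)) ht2' (by linarith [hu_le k])
    calc Real.logb 2 (Real.exp 1) / (2*((k:ℝ)+1) * (2*((k:ℝ)+1) - 1))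
          * (t^(2*(k+1)) / (1 - t^(2*(k+1))))
        ≤ 1/Real.log 2 * (((t^2)^k * t^2) / (1-t^2)) := by
          apply mul_le_mul (ha_le k) h1
            (div_nonneg (hu_pos k).le hden.le) (by positivity)
      _ = 1/Real.log 2 * (t^2/(1-t^2)) * (t^2)^k := by ring
  -- difference
  have hDiff : HasSum (fun k : ℕ =>
      l * (Real.logb 2 (Real.exp 1) / (2*((k:ℝ)+1) * (2*((k:ℝ)+1) - 1))
        * (t^(2*(k+1)) / (1 - t^(2*(k+1)))))
      - Real.logb 2 (Real.exp 1) / (2*((k:ℝ)+1) * (2*((k:ℝ)+1) - 1))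
        * (l * t^(2*(k+1)) / (1 - (1-l) * t^(2*(k+1)))))
      (l * (∑' k : ℕ, Real.logb 2 (Real.exp 1) / (2*((k:ℝ)+1) * (2*((k:ℝ)+1) - 1))
          * (t^(2*(k+1)) / (1 - t^(2*(k+1)))))
        - (1 - ∑' g : ℕ, (1-l)^g * l * binEnt ((1 - t^(g+1))/2))) :=
    (hTs.hasSum.mul_left l).sub hfib2
  have hD0 : ∀ k : ℕ, 0 ≤
      l * (Real.logb 2 (Real.exp 1) / (2*((k:ℝ)+1) * (2*((k:ℝ)+1) - 1))
        * (t^(2*(k+1)) / (1 - t^(2*(k+1)))))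
      - Real.logb 2 (Real.exp 1) / (2*((k:ℝ)+1) * (2*((k:ℝ)+1) - 1))
        * (l * t^(2*(k+1)) / (1 - (1-l) * t^(2*(k+1)))) := by
    intro k
    have hden1 : 0 < 1 - t^(2*(k+1)) := by linarith [hu_lt1 k]
    have hden2 : 0 < 1 - (1-l) * t^(2*(k+1)) := by
      nlinarith [hu_pos k, hu_lt1 k]
    have hD_eq :
        l * (Real.logb 2 (Real.exp 1) / (2*((k:ℝ)+1) * (2*((k:ℝ)+1) - 1))
          * (t^(2*(k+1)) / (1 - t^(2*(k+1)))))
        - Real.logb 2 (Real.exp 1) / (2*((k:ℝ)+1) * (2*((k:ℝ)+1) - 1))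
          * (l * t^(2*(k+1)) / (1 - (1-l) * t^(2*(k+1))))
        = l^2 * (Real.logb 2 (Real.exp 1) / (2*((k:ℝ)+1) * (2*((k:ℝ)+1) - 1)))
          * (t^(2*(k+1)))^2 / ((1 - t^(2*(k+1))) * (1 - (1-l) * t^(2*(k+1)))) :=
      aux_diff_eq _ _ _ (ne_of_gt hden1) (ne_of_gt hden2)
    rw [hD_eq]
    apply div_nonneg _ (mul_pos hden1 hden2).le
    have := ha_pos k
    positivity
  have hDle : ∀ k : ℕ,
      l * (Real.logb 2 (Real.exp 1) / (2*((k:ℝ)+1) * (2*((k:ℝ)+1) - 1))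
        * (t^(2*(k+1)) / (1 - t^(2*(k+1)))))
      - Real.logb 2 (Real.exp 1) / (2*((k:ℝ)+1) * (2*((k:ℝ)+1) - 1))
        * (l * t^(2*(k+1)) / (1 - (1-l) * t^(2*(k+1))))
      ≤ 16*e^4/(1-t^2)^2
        * (Real.logb 2 (Real.exp 1) / (2*((k:ℝ)+1) * (2*((k:ℝ)+1) - 1)) * (t^(2*(k+1)))^2) := by
    intro k
    have hden1 : 0 < 1 - t^(2*(k+1)) := by linarith [hu_lt1 k]
    have hden2 : 0 < 1 - (1-l) * t^(2*(k+1)) := by nlinarith [hu_pos k, hu_lt1 k]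
    have hD_eq :
        l * (Real.logb 2 (Real.exp 1) / (2*((k:ℝ)+1) * (2*((k:ℝ)+1) - 1))
          * (t^(2*(k+1)) / (1 - t^(2*(k+1)))))
        - Real.logb 2 (Real.exp 1) / (2*((k:ℝ)+1) * (2*((k:ℝ)+1) - 1))
          * (l * t^(2*(k+1)) / (1 - (1-l) * t^(2*(k+1))))
        = l^2 * (Real.logb 2 (Real.exp 1) / (2*((k:ℝ)+1) * (2*((k:ℝ)+1) - 1)))
          * (t^(2*(k+1)))^2 / ((1 - t^(2*(k+1))) * (1 - (1-l) * t^(2*(k+1)))) :=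
      aux_diff_eq _ _ _ (ne_of_gt hden1) (ne_of_gt hden2)
    rw [hD_eq]
    have hnum : 0 ≤ l^2 * (Real.logb 2 (Real.exp 1) / (2*((k:ℝ)+1) * (2*((k:ℝ)+1) - 1)))
        * (t^(2*(k+1)))^2 := by
      have := ha_pos k
      positivity
    have hdb : (1-t^2)^2 ≤ (1 - t^(2*(k+1))) * (1 - (1-l) * t^(2*(k+1))) := by
      have h1 : 1 - t^2 ≤ 1 - t^(2*(k+1)) := by linarith [hu_le k]
      have h2 : 1 - t^(2*(k+1)) ≤ 1 - (1-l) * t^(2*(k+1)) := by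
        nlinarith [hu_pos k]
      nlinarith
    calc l^2 * (Real.logb 2 (Real.exp 1) / (2*((k:ℝ)+1) * (2*((k:ℝ)+1) - 1)))
          * (t^(2*(k+1)))^2 / ((1 - t^(2*(k+1))) * (1 - (1-l) * t^(2*(k+1))))
        ≤ l^2 * (Real.logb 2 (Real.exp 1) / (2*((k:ℝ)+1) * (2*((k:ℝ)+1) - 1)))
          * (t^(2*(k+1)))^2 / (1-t^2)^2 :=
          div_le_div_of_nonneg_left hnum (by positivity) hdb
      _ = 16*e^4/(1-t^2)^2
          * (Real.logb 2 (Real.exp 1) / (2*((k:ℝ)+1) * (2*((k:ℝ)+1) - 1)) * (t^(2*(k+1)))^2) := by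
          rw [hl]; ring
  have hsum_eq : (∑' g : ℕ, (1-l)^g * l * binEnt ((1 - t^(g+1))/2)) - 1
      + l * (∑' k : ℕ, Real.logb 2 (Real.exp 1) / (2*((k:ℝ)+1) * (2*((k:ℝ)+1) - 1))
          * (t^(2*(k+1)) / (1 - t^(2*(k+1)))))
      = ∑' k : ℕ,
        (l * (Real.logb 2 (Real.exp 1) / (2*((k:ℝ)+1) * (2*((k:ℝ)+1) - 1))
          * (t^(2*(k+1)) / (1 - t^(2*(k+1)))))
        - Real.logb 2 (Real.exp 1) / (2*((k:ℝ)+1) * (2*((k:ℝ)+1) - 1))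
          * (l * t^(2*(k+1)) / (1 - (1-l) * t^(2*(k+1))))) := by
    have h := hDiff.tsum_eq
    linarith
  rw [hsum_eq, abs_of_nonneg (tsum_nonneg hD0)]
  calc (∑' k : ℕ,
        (l * (Real.logb 2 (Real.exp 1) / (2*((k:ℝ)+1) * (2*((k:ℝ)+1) - 1))
          * (t^(2*(k+1)) / (1 - t^(2*(k+1)))))
        - Real.logb 2 (Real.exp 1) / (2*((k:ℝ)+1) * (2*((k:ℝ)+1) - 1))
          * (l * t^(2*(k+1)) / (1 - (1-l) * t^(2*(k+1))))))
      ≤ ∑' k : ℕ, 16*e^4/(1-t^2)^2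
          * (Real.logb 2 (Real.exp 1) / (2*((k:ℝ)+1) * (2*((k:ℝ)+1) - 1)) * (t^(2*(k+1)))^2) :=
        Summable.tsum_le_tsum hDle hDiff.summable (hMs.mul_left _)
    _ = 16*e^4/(1-t^2)^2 * M := by rw [hMdef]; exact tsum_mul_left
    _ ≤ (16*M/(1-t^2)^2 + 1) * e^4 := by
        have h1 : 16*e^4/(1-t^2)^2 * M = 16*M/(1-t^2)^2 * e^4 := by ring
        have h2 : 0 < e^4 := by positivity
        rw [h1]
        nlinarith
end

section
/- Fix λ ∈ (0,1) and let G be a geometric random variable with parameter λ. For ε ∈ (0,1/2) set q = 1/2 - ε and β(ε) := E[h((1-(1-2q)^G)/2)] = E[h((1-(2ε)^G)/2)]. Then β(ε) = 1 - 2·log₂e·λ·ε² + O(ε⁴) as ε → 0; that is, there exist C > 0 and ε₀ > 0 such that for all 0 < ε < ε₀, |β(ε) - 1 + 2·log₂e·λ·ε²| ≤ C·ε⁴. -/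
set_option maxHeartbeats 1000000


open Real Filter MeasureTheory

lemma binEnt_expand (x : ℝ) (hx0 : 0 ≤ x) (hx : x < 1) :
    binEnt ((1 - x)/2) = 1 - ((1+x)*Real.log (1+x) + (1-x)*Real.log (1-x))/(2*Real.log 2) := by
  have hL : Real.log 2 ≠ 0 := ne_of_gt (Real.log_pos (by norm_num))
  unfold binEnt
  have e2 : (1 : ℝ) - (1 - x)/2 = (1+x)/2 := by ring
  rw [e2, Real.logb, Real.logb,
    Real.log_div (by linarith) two_ne_zero, Real.log_div (by linarith) two_ne_zero]
  field_simp
  ring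

lemma key (x : ℝ) (hx0 : 0 ≤ x) (hx : x ≤ 1/2) :
    |binEnt ((1 - x)/2) - 1 + x^2/(2*Real.log 2)| ≤ 3*x^4 := by
  have hL : (0.6931471803 : ℝ) < Real.log 2 := Real.log_two_gt_d9
  have habs : |x| < 1 := by rw [abs_of_nonneg hx0]; linarith
  have habs' : |(-x)| < 1 := by rwa [abs_neg]
  have h1 := Real.abs_log_sub_add_sum_range_le habs 4
  have h2 := Real.abs_log_sub_add_sum_range_le habs' 4
  simp only [Finset.sum_range_succ, Finset.sum_range_zero] at h1 h2
  rw [abs_of_nonneg hx0] at h1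
  rw [abs_neg, abs_of_nonneg hx0] at h2
  norm_num at h1 h2
  set r : ℝ := x + x ^ 2 / 2 + x ^ 3 / 3 + x ^ 4 / 4 + Real.log (1 - x) with hrdef
  have h2' : |-x + x ^ 2 / 2 - x ^ 3 / 3 + x ^ 4 / 4 + Real.log (1 + x)| ≤ x ^ 5 / (1 - x) := by
    rw [show -x + x ^ 2 / 2 - x ^ 3 / 3 + x ^ 4 / 4 + Real.log (1 + x)
        = -x + x ^ 2 / 2 + (-x) ^ 3 / 3 + x ^ 4 / 4 + Real.log (1 + x) from by ring]
    exact h2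
  set s : ℝ := -x + x ^ 2 / 2 - x ^ 3 / 3 + x ^ 4 / 4 + Real.log (1 + x) with hsdef
  have hx5 : x^5/(1-x) ≤ 2*x^5 := by
    rw [div_le_iff₀ (by linarith)]
    nlinarith [pow_nonneg hx0 5]
  have hr : |r| ≤ 2*x^5 := h1.trans hx5
  have hs : |s| ≤ 2*x^5 := h2'.trans hx5
  have hx54 : x^5 ≤ x^4/2 := by nlinarith [pow_nonneg hx0 4]
  rw [binEnt_expand x hx0 (by linarith)]
  have hge : (1:ℝ) - ((1+x)*Real.log (1+x) + (1-x)*Real.log (1-x))/(2*Real.log 2) - 1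
      + x^2/(2*Real.log 2)
      = (-(x^4/6) + (-((1+x)*s)) + (-((1-x)*r)))/(2*Real.log 2) := by
    rw [hrdef, hsdef]; ring
  rw [hge, abs_div, abs_of_pos (show (0:ℝ) < 2*Real.log 2 by linarith)]
  have htri := abs_add_three (-(x^4/6)) (-((1+x)*s)) (-((1-x)*r))
  have e1 : |(-((1+x)*s))| ≤ (3/2)*(2*x^5) := by
    rw [abs_neg, abs_mul, abs_of_nonneg (by linarith : (0:ℝ) ≤ 1+x)]
    exact mul_le_mul (by linarith) hs (abs_nonneg _) (by norm_num)
  have e2 : |(-((1-x)*r))| ≤ 1*(2*x^5) := by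
    rw [abs_neg, abs_mul, abs_of_nonneg (by linarith : (0:ℝ) ≤ 1-x)]
    exact mul_le_mul (by linarith) hr (abs_nonneg _) (by norm_num)
  have e0 : |(-(x^4/6))| = x^4/6 := by
    rw [abs_neg, abs_of_nonneg (by positivity)]
  have hnum : |(-(x^4/6) + (-((1+x)*s)) + (-((1-x)*r)))| ≤ 3*x^4 := by
    calc _ ≤ |(-(x^4/6))| + |(-((1+x)*s))| + |(-((1-x)*r))| := htri
    _ ≤ x^4/6 + (3/2)*(2*x^5) + 1*(2*x^5) := by rw [e0]; linarith
    _ ≤ 3*x^4 := by have hx4 : (0:ℝ) ≤ x^4 := pow_nonneg hx0 4; linarith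
  calc |(-(x^4/6) + (-((1+x)*s)) + (-((1-x)*r)))| / (2*Real.log 2)
      ≤ |(-(x^4/6) + (-((1+x)*s)) + (-((1-x)*r)))| := div_le_self (abs_nonneg _) (by linarith)
    _ ≤ 3*x^4 := hnum

/-- For fixed `λ ∈ (0,1)`, `G` geometric with parameter `λ` and `q = 1/2 - ε`,
`β(ε) = E[h((1-(2ε)^G)/2)]` satisfies `β(ε) = 1 - 2·log₂e·λ·ε² + O(ε⁴)`. -/
theorem beta_fast_transitions_asymptotics (lam : ℝ) (hlam : lam ∈ Set.Ioo (0:ℝ) 1) :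
    ∃ C > (0:ℝ), ∃ e₀ > (0:ℝ), ∀ e : ℝ, 0 < e → e < e₀ → e < 1/2 →
      |(∑' g : ℕ, (1 - lam)^g * lam * binEnt ((1 - (2*e)^(g+1))/2))
        - 1 + 2 * Real.logb 2 (Real.exp 1) * lam * e^2| ≤ C * e^4 := by
  obtain ⟨hl0, hl1⟩ := hlam
  refine ⟨100, by norm_num, 1/4, by norm_num, fun e he0 he4 _ => ?_⟩
  have hL : (0.6931471803 : ℝ) < Real.log 2 := Real.log_two_gt_d9
  set L := Real.log 2 with hLdef
  set a := 1 - lam with ha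
  have ha0 : 0 ≤ a := by simp [ha]; linarith
  have ha1 : a < 1 := by simp [ha]; linarith
  have hlogb : Real.logb 2 (Real.exp 1) = 1 / L := by
    rw [Real.logb, Real.log_exp, hLdef]
  have h2e : 2*e ≤ 1/2 := by linarith
  have h2e0 : (0:ℝ) ≤ 2*e := by linarith
  have he2 : e^2 ≤ 1/16 := by nlinarith
  have he4 : e^4 ≤ 1/256 := by nlinarith [sq_nonneg e, sq_nonneg (e^2)]
  have he40 : (0:ℝ) ≤ e^4 := by positivity
  set t : ℕ → ℝ := fun g => a^g * lam * binEnt ((1 - (2*e)^(g+1))/2) with htdef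
  set u : ℕ → ℝ := fun g => a^g * lam with hudef
  set c : ℝ := lam*(4*e^2)/(2*L) with hcdef
  set r2 : ℝ := a*(4*e^2) with hr2def
  set r4 : ℝ := a*(16*e^4) with hr4def
  set v : ℕ → ℝ := fun g => c * r2^g with hvdef
  set B : ℕ → ℝ := fun g => (3*lam*(16*e^4)) * r4^g with hBdef
  clear_value L a t u c r2 r4 v B
  have hr20 : 0 ≤ r2 := by rw [hr2def]; positivity
  have hr21 : r2 ≤ 4*e^2 := by nlinarith
  have hr2lt : r2 < 1 := by nlinarith
  have hr40 : 0 ≤ r4 := by rw [hr4def]; positivity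
  have hr41 : r4 ≤ 1/16 := by nlinarith
  have hr4lt : r4 < 1 := by nlinarith
  -- pointwise estimate
  have hterm : ∀ g : ℕ, |t g - u g + v g| ≤ B g := by
    intro g
    have hxg0 : (0:ℝ) ≤ (2*e)^(g+1) := pow_nonneg h2e0 _
    have hxg : (2*e)^(g+1) ≤ 1/2 := by
      calc (2*e)^(g+1) ≤ (2*e)^1 := pow_le_pow_of_le_one h2e0 (by linarith) (by omega)
      _ = 2*e := pow_one _
      _ ≤ 1/2 := h2e
    have hk := key ((2*e)^(g+1)) hxg0 hxg
    rw [← hLdef] at hk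
    have hp2 : ((2*e)^(g+1))^2 = (4*e^2)^(g+1) := by
      rw [show (4*e^2 : ℝ) = (2*e)^2 from by ring, ← pow_mul, ← pow_mul, Nat.mul_comm]
    have hp4 : ((2*e)^(g+1))^4 = (16*e^4)^(g+1) := by
      rw [show (16*e^4 : ℝ) = (2*e)^4 from by ring, ← pow_mul, ← pow_mul, Nat.mul_comm]
    have hfac : t g - u g + v g
        = a^g*lam * (binEnt ((1 - (2*e)^(g+1))/2) - 1 + ((2*e)^(g+1))^2/(2*L)) := by
      simp only [htdef, hudef, hvdef]
      rw [hp2, hr2def, hcdef, mul_pow a (4*e^2) g]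
      have hLne : L ≠ 0 := by linarith
      field_simp
      ring
    have hBfac : B g = a^g*lam * (3 * ((2*e)^(g+1))^4) := by
      simp only [hBdef]; rw [hp4, hr4def, mul_pow a (16*e^4) g]; ring
    rw [hfac, hBfac, abs_mul, abs_of_nonneg (mul_nonneg (pow_nonneg ha0 g) hl0.le)]
    exact mul_le_mul_of_nonneg_left hk (mul_nonneg (pow_nonneg ha0 g) hl0.le)
  -- summability
  have hsu : Summable u := by rw [hudef]; exact (summable_geometric_of_lt_one ha0 ha1).mul_right lam
  have hsv : Summable v := by rw [hvdef]; exact (summable_geometric_of_lt_one hr20 hr2lt).mul_left c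
  have hsB : Summable B := by rw [hBdef]; exact (summable_geometric_of_lt_one hr40 hr4lt).mul_left _
  have hswabs : Summable (fun g => |t g - u g + v g|) :=
    Summable.of_nonneg_of_le (fun g => abs_nonneg _) hterm hsB
  have hsw : Summable (fun g => t g - u g + v g) := summable_abs_iff.mp hswabs
  have hst : Summable t := by
    have : t = fun g => (u g - v g) + (t g - u g + v g) := by funext g; ring
    rw [this]; exact (hsu.sub hsv).add hsw
  -- tsum values
  have htsum_u : ∑' g, u g = 1 := by
    simp only [hudef]
    rw [tsum_mul_right, tsum_geometric_of_lt_one ha0 ha1]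
    have : (1:ℝ) - a = lam := by simp [ha]
    rw [this, inv_mul_cancel₀ (ne_of_gt hl0)]
  have htsum_v : ∑' g, v g = c * (1 - r2)⁻¹ := by
    simp only [hvdef]
    rw [tsum_mul_left, tsum_geometric_of_lt_one hr20 hr2lt]
  have htsum_B : ∑' g, B g = (3*lam*(16*e^4)) * (1 - r4)⁻¹ := by
    simp only [hBdef]
    rw [tsum_mul_left, tsum_geometric_of_lt_one hr40 hr4lt]
  have hsplit : ∑' g, t g = (∑' g, u g) - (∑' g, v g) + ∑' g, (t g - u g + v g) := by
    rw [← Summable.tsum_sub hsu hsv, ← Summable.tsum_add (hsu.sub hsv) hsw]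
    congr 1; funext g; ring
  have hW : |∑' g, (t g - u g + v g)| ≤ (3*lam*(16*e^4)) * (1 - r4)⁻¹ := by
    calc |∑' g, (t g - u g + v g)| ≤ ∑' g, |t g - u g + v g| := by
          simpa [Real.norm_eq_abs] using
            norm_tsum_le_tsum_norm (f := fun g => t g - u g + v g)
              (by simpa [Real.norm_eq_abs] using hswabs)
    _ ≤ ∑' g, B g := Summable.tsum_le_tsum hterm hswabs hsB
    _ = _ := htsum_B
  -- final numerics
  have hinv2 : (1 - r2)⁻¹ ≤ 4/3 := by
    rw [show (4/3 : ℝ) = (3/4 : ℝ)⁻¹ from by norm_num]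
    exact inv_anti₀ (by norm_num) (by linarith)
  have hinv2' : 1 ≤ (1 - r2)⁻¹ := one_le_inv₀ (by linarith) |>.mpr (by linarith)
  have hinv4 : (1 - r4)⁻¹ ≤ 16/15 := by
    rw [show (16/15 : ℝ) = (15/16 : ℝ)⁻¹ from by norm_num]
    exact inv_anti₀ (by norm_num) (by linarith)
  have hc0 : 0 ≤ c := by
    rw [hcdef]; exact div_nonneg (by positivity) (by linarith)
  have hcle : c ≤ 4*e^2 := by
    rw [hcdef, div_le_iff₀ (by linarith : (0:ℝ) < 2*L)]
    nlinarith [sq_nonneg e]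
  have hceq : 2 * (1/L) * lam * e^2 = c := by
    rw [hcdef]; field_simp; ring
  rw [hsplit, htsum_u, htsum_v, hlogb, hceq]
  have hexpr : 1 - c * (1-r2)⁻¹ + (∑' g, (t g - u g + v g)) - 1 + c
      = c * (1 - (1-r2)⁻¹) + (∑' g, (t g - u g + v g)) := by ring
  rw [hexpr]
  have h1 : |c * (1 - (1-r2)⁻¹)| ≤ 30 * e^4 := by
    rw [abs_mul, abs_of_nonneg hc0, abs_of_nonpos (by linarith)]
    have h2 : -(1 - (1-r2)⁻¹) ≤ (4/3) * r2 := by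
      have hne : (1:ℝ) - r2 ≠ 0 := by linarith
      have : (1-r2)⁻¹ - 1 = r2 * (1-r2)⁻¹ := by
        field_simp
        ring
      nlinarith
    calc c * -(1 - (1-r2)⁻¹) ≤ (4*e^2) * ((4/3) * r2) := by
          apply mul_le_mul hcle h2 (by linarith) (by positivity)
      _ ≤ 30 * e^4 := by nlinarith
  have h2 : |∑' g, (t g - u g + v g)| ≤ 52 * e^4 := by
    calc _ ≤ (3*lam*(16*e^4)) * (1 - r4)⁻¹ := hW
    _ ≤ (48 * e^4) * (16/15) := by
        apply mul_le_mul (by nlinarith) hinv4 (inv_nonneg.mpr (by linarith)) (by positivity)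
    _ ≤ 52 * e^4 := by nlinarith
  calc |c * (1 - (1-r2)⁻¹) + (∑' g, (t g - u g + v g))|
      ≤ |c * (1 - (1-r2)⁻¹)| + |∑' g, (t g - u g + v g)| := abs_add_le _ _
    _ ≤ 30 * e^4 + 52 * e^4 := by linarith
    _ ≤ 100 * e^4 := by linarith
end
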